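/- arXiv:math/0610701 — 4 statements merged into one kernel-verified Lean document; each statement's English description precedes it below -/
import Mathlib

section
/- Let T₂(ℚ) denote the ℚ-subalgebra of M₂(ℚ) consisting of upper triangular 2×2 rational matrices (matrices X with X₂₁ = 0). Let Γ ⊆ M₂(ℚ) be a subring consisting of upper triangular matrices, finitely generated as a ℤ-module, whose ℚ-span equals T₂(ℚ) (i.e., Γ is a ℤ-order in T₂(ℚ)). Then there is no injective group homomorphism from ℤ × ℤ into the unit group Γˣ. -/
section Aux

/-- entry (i,j) as a ℤ-linear map on matrices. -/
private def entryLM (i j : Fin 2) : Matrix (Fin 2) (Fin 2) ℚ →ₗ[ℤ] ℚ where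
  toFun X := X i j
  map_add' _ _ := rfl
  map_smul' _ _ := rfl

/-- Any element of a ℤ-fg subring of ℚ... here: elements of a fg ℤ-submodule of ℚ that is
a subring are integers. -/
private lemma int_of_mem_fg_subring (S : Subring ℚ)
    (hfgS : (Submodule.span ℤ (S : Set ℚ)).FG) {x : ℚ} (hx : x ∈ S) :
    ∃ n : ℤ, (n : ℚ) = x := by
  have hint : IsIntegral ℤ x := by
    refine IsIntegral.of_mem_of_fg (subalgebraOfSubring S) ?_ x hx
    have : (subalgebraOfSubring S).toSubmodule = Submodule.span ℤ (S : Set ℚ) := by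
      refine le_antisymm ?_ ?_
      · intro y hy
        exact Submodule.subset_span hy
      · rw [Submodule.span_le]
        intro y hy
        exact hy
    rw [this]
    exact hfgS
  obtain ⟨n, hn⟩ := IsIntegrallyClosed.isIntegral_iff.mp hint
  exact ⟨n, by simpa using hn⟩

end Aux

/-- Every ℤ-order `Γ` in the algebra `T₂(ℚ)` of upper triangular 2×2
rational matrices (a subring of `M₂(ℚ)` consisting of upper triangular matrices, finitely
generated as a ℤ-module, whose ℚ-span is exactly the set of upper triangular matrices)
has unit group containing no free abelian subgroup of rank two. -/
theorem no_Z2_in_units_of_order_T2Q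
    (Γ : Subring (Matrix (Fin 2) (Fin 2) ℚ))
    (htri : ∀ x ∈ Γ, x 1 0 = 0)
    (hfg : AddSubgroup.FG Γ.toAddSubgroup)
    (hspan : ∀ X : Matrix (Fin 2) (Fin 2) ℚ,
      X ∈ Submodule.span ℚ (Γ : Set (Matrix (Fin 2) (Fin 2) ℚ)) ↔ X 1 0 = 0) :
    ¬ ∃ f : Multiplicative (ℤ × ℤ) →* Γˣ, Function.Injective f := by
  classical
  rintro ⟨f, hf⟩
  -- Γ as a ℤ-submodule, finitely generated
  have hfgM : (AddSubgroup.toIntSubmodule Γ.toAddSubgroup).FG := by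
    rw [Submodule.fg_iff_addSubgroup_fg]
    exact hfg
  -- diagonal ring homs
  have hmul0 : ∀ x y : Γ, ((x * y : Γ) : Matrix (Fin 2) (Fin 2) ℚ) 0 0
      = (x : Matrix (Fin 2) (Fin 2) ℚ) 0 0 * (y : Matrix (Fin 2) (Fin 2) ℚ) 0 0 := by
    rintro ⟨x, hx⟩ ⟨y, hy⟩
    have hy10 : y 1 0 = 0 := htri y hy
    show (x * y) 0 0 = x 0 0 * y 0 0
    simp [Matrix.mul_apply, Fin.sum_univ_two, hy10]
  have hmul1 : ∀ x y : Γ, ((x * y : Γ) : Matrix (Fin 2) (Fin 2) ℚ) 1 1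
      = (x : Matrix (Fin 2) (Fin 2) ℚ) 1 1 * (y : Matrix (Fin 2) (Fin 2) ℚ) 1 1 := by
    rintro ⟨x, hx⟩ ⟨y, hy⟩
    have hx10 : x 1 0 = 0 := htri x hx
    show (x * y) 1 1 = x 1 1 * y 1 1
    simp [Matrix.mul_apply, Fin.sum_univ_two, hx10]
  set d0 : Γ →+* ℚ :=
    { toFun := fun x => (x : Matrix (Fin 2) (Fin 2) ℚ) 0 0
      map_one' := by simp
      map_mul' := hmul0
      map_zero' := by simp
      map_add' := by rintro ⟨x, hx⟩ ⟨y, hy⟩; rfl } with hd0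
  set d1 : Γ →+* ℚ :=
    { toFun := fun x => (x : Matrix (Fin 2) (Fin 2) ℚ) 1 1
      map_one' := by simp
      map_mul' := hmul1
      map_zero' := by simp
      map_add' := by rintro ⟨x, hx⟩ ⟨y, hy⟩; rfl } with hd1
  -- diagonal entries of elements of Γ are integers
  have hdiag : ∀ (i : Fin 2) (x : Matrix (Fin 2) (Fin 2) ℚ), x ∈ Γ →
      ∃ n : ℤ, (n : ℚ) = x i i := by
    intro i x hx
    -- image subring
    set S : Subring ℚ :=
      { carrier := (fun y : Matrix (Fin 2) (Fin 2) ℚ => y i i) '' Γ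
        one_mem' := ⟨1, Γ.one_mem, by simp⟩
        zero_mem' := ⟨0, Γ.zero_mem, by simp⟩
        add_mem' := by
          rintro a b ⟨u, hu, rfl⟩ ⟨v, hv, rfl⟩
          exact ⟨u + v, Γ.add_mem hu hv, by simp⟩
        neg_mem' := by
          rintro a ⟨u, hu, rfl⟩
          exact ⟨-u, Γ.neg_mem hu, by simp⟩
        mul_mem' := by
          rintro a b ⟨u, hu, rfl⟩ ⟨v, hv, rfl⟩
          refine ⟨u * v, Γ.mul_mem hu hv, ?_⟩
          fin_cases i
          · exact hmul0 ⟨u, hu⟩ ⟨v, hv⟩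
          · exact hmul1 ⟨u, hu⟩ ⟨v, hv⟩ } with hS
    have hxS : x i i ∈ S := ⟨x, hx, rfl⟩
    refine int_of_mem_fg_subring S ?_ hxS
    have hmap : Submodule.span ℤ (S : Set ℚ)
        = Submodule.map (entryLM i i) (AddSubgroup.toIntSubmodule Γ.toAddSubgroup) := by
      refine le_antisymm ?_ ?_
      · rw [Submodule.span_le]
        rintro y ⟨u, hu, rfl⟩
        exact ⟨u, hu, rfl⟩
      · rintro y ⟨u, hu, rfl⟩
        exact Submodule.subset_span ⟨u, hu, rfl⟩
    rw [hmap]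
    exact Submodule.FG.map _ hfgM
  -- for every unit u, its diagonal entries satisfy d² = 1
  have hunit : ∀ (u : Γˣ) (i : Fin 2),
      ((u : Γ) : Matrix (Fin 2) (Fin 2) ℚ) i i * (((u⁻¹ : Γˣ) : Γ) : Matrix (Fin 2) (Fin 2) ℚ) i i = 1 := by
    intro u i
    fin_cases i
    · have := hmul0 (u : Γ) ((u⁻¹ : Γˣ) : Γ)
      rw [u.mul_inv] at this
      simpa using this.symm
    · have := hmul1 (u : Γ) ((u⁻¹ : Γˣ) : Γ)
      rw [u.mul_inv] at this
      simpa using this.symm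
  have hsq : ∀ (u : Γˣ) (i : Fin 2),
      ((u : Γ) : Matrix (Fin 2) (Fin 2) ℚ) i i = 1 ∨
      ((u : Γ) : Matrix (Fin 2) (Fin 2) ℚ) i i = -1 := by
    intro u i
    obtain ⟨n, hn⟩ := hdiag i _ (u : Γ).2
    obtain ⟨m, hm⟩ := hdiag i _ ((u⁻¹ : Γˣ) : Γ).2
    have h1 : (n : ℚ) * (m : ℚ) = 1 := by rw [hn, hm]; exact hunit u i
    have h2 : n * m = 1 := by exact_mod_cast h1
    have : IsUnit n := IsUnit.of_mul_eq_one m h2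
    rcases Int.isUnit_iff.mp this with h | h
    · left; rw [← hn, h]; norm_num
    · right; rw [← hn, h]; norm_num
  -- entries of squared units
  have hsqmat : ∀ u : Γˣ, ∀ i : Fin 2,
      (((u ^ 2 : Γˣ) : Γ) : Matrix (Fin 2) (Fin 2) ℚ) i i = 1 := by
    intro u i
    have : ((u ^ 2 : Γˣ) : Γ) = (u : Γ) * (u : Γ) := by
      rw [sq]; rfl
    rw [this]
    have hm : (((u : Γ) * (u : Γ) : Γ) : Matrix (Fin 2) (Fin 2) ℚ) i i
        = ((u : Γ) : Matrix (Fin 2) (Fin 2) ℚ) i i * ((u : Γ) : Matrix (Fin 2) (Fin 2) ℚ) i i := by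
      fin_cases i
      · exact hmul0 _ _
      · exact hmul1 _ _
    rw [hm]
    rcases hsq u i with h | h <;> rw [h] <;> norm_num
  -- the additive map E : ℤ × ℤ → ℚ
  set E : ℤ × ℤ → ℚ :=
    fun z => (((f (Multiplicative.ofAdd z) ^ 2 : Γˣ) : Γ) : Matrix (Fin 2) (Fin 2) ℚ) 0 1 with hE
  have hEadd : ∀ z w : ℤ × ℤ, E (z + w) = E z + E w := by
    intro z w
    have hcomm : Commute (f (Multiplicative.ofAdd z)) (f (Multiplicative.ofAdd w)) :=
      (Commute.all _ _).map f
    have hmulu : f (Multiplicative.ofAdd (z + w)) ^ 2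
        = f (Multiplicative.ofAdd z) ^ 2 * f (Multiplicative.ofAdd w) ^ 2 := by
      have h1 : Multiplicative.ofAdd (z + w)
          = Multiplicative.ofAdd z * Multiplicative.ofAdd w := rfl
      rw [h1, map_mul, hcomm.mul_pow]
    set A : Matrix (Fin 2) (Fin 2) ℚ :=
      (((f (Multiplicative.ofAdd z) ^ 2 : Γˣ) : Γ) : Matrix (Fin 2) (Fin 2) ℚ) with hA
    set B : Matrix (Fin 2) (Fin 2) ℚ :=
      (((f (Multiplicative.ofAdd w) ^ 2 : Γˣ) : Γ) : Matrix (Fin 2) (Fin 2) ℚ) with hB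
    have hAB : E (z + w) = (A * B) 0 1 := by
      rw [hE]
      simp only [hmulu]
      rfl
    rw [hAB, Matrix.mul_apply, Fin.sum_univ_two]
    have hA00 : A 0 0 = 1 := hsqmat _ 0
    have hB11 : B 1 1 = 1 := hsqmat _ 1
    rw [hA00, hB11]
    ring_nf
    exact add_comm _ _
  have hEzero : ∀ z : ℤ × ℤ, E z = 0 → z = 0 := by
    intro z hz
    have hmem := ((f (Multiplicative.ofAdd z) ^ 2 : Γˣ) : Γ).2
    have h10 : (((f (Multiplicative.ofAdd z) ^ 2 : Γˣ) : Γ) : Matrix (Fin 2) (Fin 2) ℚ) 1 0 = 0 :=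
      htri _ hmem
    have hmat : (((f (Multiplicative.ofAdd z) ^ 2 : Γˣ) : Γ) : Matrix (Fin 2) (Fin 2) ℚ)
        = (1 : Matrix (Fin 2) (Fin 2) ℚ) := by
      ext i j
      fin_cases i <;> fin_cases j
      · simpa using hsqmat (f (Multiplicative.ofAdd z)) 0
      · simpa [hE] using hz
      · simpa using h10
      · simpa using hsqmat (f (Multiplicative.ofAdd z)) 1
    have hone : (f (Multiplicative.ofAdd z)) ^ 2 = 1 := by
      apply Units.ext
      apply Subtype.ext
      simpa using hmat
    have : f (Multiplicative.ofAdd z ^ 2) = f 1 := by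
      rw [map_pow, map_one, hone]
    have h2 : Multiplicative.ofAdd z ^ 2 = 1 := hf this
    have h3 : (2 : ℤ) • z = 0 := by
      have := congrArg Multiplicative.toAdd h2
      simpa [← ofAdd_nsmul] using this
    have h4 : z + z = 0 := by
      rw [← two_smul ℤ z]; exact h3
    rcases z with ⟨m, n⟩
    have hm : m + m = 0 := congrArg Prod.fst h4
    have hn : n + n = 0 := congrArg Prod.snd h4
    have : m = 0 := by omega
    have : n = 0 := by omega
    simp [Prod.ext_iff]; omega
  -- rank argument in ℚ
  set a : ℚ := E (1, 0) with ha
  set b : ℚ := E (0, 1) with hb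
  have ha0 : a ≠ 0 := by
    intro h
    have := hEzero (1, 0) h
    simp [Prod.ext_iff] at this
  have hb0 : b ≠ 0 := by
    intro h
    have := hEzero (0, 1) h
    simp [Prod.ext_iff] at this
  -- find integer relation
  set r : ℚ := a / b with hr
  have hkey : (r.den : ℚ) * a - (r.num : ℚ) * b = 0 := by
    have h1 : (r.den : ℚ) * r = (r.num : ℚ) := by
      rw [mul_comm]
      exact_mod_cast Rat.mul_den_eq_num r
    have h2 : r * b = a := div_mul_cancel₀ a hb0
    calc (r.den : ℚ) * a - (r.num : ℚ) * b
        = (r.den : ℚ) * (r * b) - ((r.den : ℚ) * r) * b := by rw [h2, h1]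
      _ = 0 := by ring
  -- E of integer combinations
  have hEsmul : ∀ (n : ℤ) (z : ℤ × ℤ), E (n • z) = n • E z := by
    intro n z
    have : E 0 = 0 := by
      have := hEadd 0 0
      simpa using this
    exact AddMonoidHom.map_zsmul (AddMonoidHom.mk' E hEadd) n z
  have hrel : E ((r.den : ℤ) • (1, 0) + (-r.num) • (0, 1)) = 0 := by
    rw [hEadd, hEsmul, hEsmul, ← ha, ← hb]
    push_cast
    have : (r.den : ℚ) * a + (-r.num : ℚ) * b = (r.den : ℚ) * a - (r.num : ℚ) * b := by ring
    simp only [zsmul_eq_mul]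
    push_cast
    rw [this, hkey]
  have hzero := hEzero _ hrel
  have hden : (r.den : ℤ) ≠ 0 := by exact_mod_cast r.den_nz
  apply hden
  have : ((r.den : ℤ) • ((1, 0) : ℤ × ℤ) + (-r.num) • ((0, 1) : ℤ × ℤ)).1 = (r.den : ℤ) := by
    simp
  rw [hzero] at this
  simpa using this.symm
end

section
/- Let c₁, c₂ be negative rational numbers and let ℍ[ℚ, c₁, c₂] be the quaternion ℚ-algebra with generators i, j satisfying i² = c₁, j² = c₂, ij = -ji (a totally definite quaternion algebra over ℚ). Then every ℤ-order in ℍ[ℚ, c₁, c₂] has finite unit group; that is, every subring Γ ⊆ ℍ[ℚ, c₁, c₂] that is finitely generated as a ℤ-module and whose ℚ-span is all of ℍ[ℚ, c₁, c₂] satisfies that Γˣ is finite. -/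
open Quaternion

section Aux

variable {c₁ c₂ : ℚ}

/-- The reduced norm on a rational quaternion algebra. -/
private def qnorm (c₁ c₂ : ℚ) (x : ℍ[ℚ, c₁, c₂]) : ℚ :=
  x.re ^ 2 - c₁ * x.imI ^ 2 - c₂ * x.imJ ^ 2 + c₁ * c₂ * x.imK ^ 2

private lemma qnorm_mul (a b : ℍ[ℚ, c₁, c₂]) :
    qnorm c₁ c₂ (a * b) = qnorm c₁ c₂ a * qnorm c₁ c₂ b := by
  simp only [qnorm, QuaternionAlgebra.re_mul, QuaternionAlgebra.imI_mul,
    QuaternionAlgebra.imJ_mul, QuaternionAlgebra.imK_mul]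
  ring

private lemma qnorm_one : qnorm c₁ c₂ 1 = 1 := by
  simp [qnorm]

private lemma qnorm_pos (hc₁ : c₁ < 0) (hc₂ : c₂ < 0) {a : ℍ[ℚ, c₁, c₂]} (ha : a ≠ 0) :
    0 < qnorm c₁ c₂ a := by
  have h1 : 0 ≤ -c₁ * a.imI ^ 2 := mul_nonneg (by linarith) (sq_nonneg _)
  have h2 : 0 ≤ -c₂ * a.imJ ^ 2 := mul_nonneg (by linarith) (sq_nonneg _)
  have h3 : 0 ≤ c₁ * c₂ * a.imK ^ 2 := mul_nonneg (by nlinarith) (sq_nonneg _)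
  have h0 : 0 ≤ a.re ^ 2 := sq_nonneg _
  have : ¬(a.re = 0 ∧ a.imI = 0 ∧ a.imJ = 0 ∧ a.imK = 0) := by
    rintro ⟨e0, e1, e2, e3⟩
    exact ha (QuaternionAlgebra.ext (by simpa using e0) (by simpa using e1)
      (by simpa using e2) (by simpa using e3))
  rcases not_and_or.mp this with h | h
  · have : 0 < a.re ^ 2 := by positivity
    simp only [qnorm]; nlinarith
  rcases not_and_or.mp h with h | h
  · have : 0 < a.imI ^ 2 := by positivity
    have : 0 < -c₁ * a.imI ^ 2 := mul_pos (by linarith) this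
    simp only [qnorm]; nlinarith
  rcases not_and_or.mp h with h | h
  · have : 0 < a.imJ ^ 2 := by positivity
    have : 0 < -c₂ * a.imJ ^ 2 := mul_pos (by linarith) this
    simp only [qnorm]; nlinarith
  · have : 0 < a.imK ^ 2 := by positivity
    have : 0 < c₁ * c₂ * a.imK ^ 2 := mul_pos (by nlinarith) this
    simp only [qnorm]; nlinarith

/-- A rational whose denominator divides `N` becomes an integer after multiplying by `N`. -/
private lemma den_dvd_int {q : ℚ} {N : ℕ} (h : q.den ∣ N) : ∃ m : ℤ, q * N = m := by
  obtain ⟨t, ht⟩ := h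
  refine ⟨q.num * t, ?_⟩
  have hqd : q * (q.den : ℚ) = (q.num : ℚ) := by exact_mod_cast Rat.mul_den_eq_num q
  rw [ht]
  push_cast
  rw [← mul_assoc, hqd]

private lemma int_abs_le_sq (m : ℤ) : |m| ≤ m ^ 2 := by
  rcases eq_or_lt_of_le (abs_nonneg m) with h | h
  · have hm0 : m = 0 := abs_eq_zero.mp h.symm
    simp [hm0]
  · have h1 : 1 ≤ |m| := h
    nlinarith [sq_abs m]

end Aux

set_option maxHeartbeats 1000000 in
/-- If `c₁, c₂` are negative rationals, then every ℤ-order in the totally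
definite quaternion algebra `ℍ[ℚ, c₁, c₂]` has finite unit group. -/
theorem finite_units_of_order_totally_definite_quaternion
    (c₁ c₂ : ℚ) (hc₁ : c₁ < 0) (hc₂ : c₂ < 0)
    (Γ : Subring ℍ[ℚ, c₁, c₂])
    (hfg : AddSubgroup.FG Γ.toAddSubgroup)
    (hspan : Submodule.span ℚ (Γ : Set ℍ[ℚ, c₁, c₂]) = ⊤) :
    Finite Γˣ := by
  classical
  obtain ⟨S, hS⟩ := hfg
  -- common denominator
  set N : ℕ := ∏ s ∈ S, ((s.re.den * s.imI.den) * (s.imJ.den * s.imK.den)) with hNdef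
  have hNpos : 0 < N := Finset.prod_pos fun s _ =>
    Nat.mul_pos (Nat.mul_pos s.re.pos s.imI.pos) (Nat.mul_pos s.imJ.pos s.imK.pos)
  have hNQ : (0 : ℚ) < N := by exact_mod_cast hNpos
  have hNne : (N : ℚ) ≠ 0 := ne_of_gt hNQ
  -- the set of rationals with denominator dividing N
  set Z : Set ℚ := {q | ∃ m : ℤ, q * N = m} with hZdef
  have hZ0 : (0 : ℚ) ∈ Z := ⟨0, by simp⟩
  have hZadd : ∀ {p q : ℚ}, p ∈ Z → q ∈ Z → p + q ∈ Z := by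
    rintro p q ⟨m, hm⟩ ⟨m', hm'⟩
    exact ⟨m + m', by push_cast [← hm, ← hm']; ring⟩
  have hZneg : ∀ {p : ℚ}, p ∈ Z → -p ∈ Z := by
    rintro p ⟨m, hm⟩
    exact ⟨-m, by push_cast [← hm]; ring⟩
  -- the subgroup of quaternions with all coordinates in Z
  let D : AddSubgroup ℍ[ℚ, c₁, c₂] :=
    { carrier := {x | x.re ∈ Z ∧ x.imI ∈ Z ∧ x.imJ ∈ Z ∧ x.imK ∈ Z}
      zero_mem' := ⟨hZ0, hZ0, hZ0, hZ0⟩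
      add_mem' := fun ha hb => ⟨hZadd ha.1 hb.1, hZadd ha.2.1 hb.2.1,
        hZadd ha.2.2.1 hb.2.2.1, hZadd ha.2.2.2 hb.2.2.2⟩
      neg_mem' := fun ha => ⟨hZneg ha.1, hZneg ha.2.1, hZneg ha.2.2.1, hZneg ha.2.2.2⟩ }
  have hΓD : ∀ x ∈ Γ, x ∈ D := by
    intro x hx
    have hx' : x ∈ AddSubgroup.closure (S : Set ℍ[ℚ, c₁, c₂]) := by
      rw [hS]; exact hx
    refine (AddSubgroup.closure_le D).2 ?_ hx'
    intro s hsS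
    have hdvd : ((s.re.den * s.imI.den) * (s.imJ.den * s.imK.den)) ∣ N :=
      Finset.dvd_prod_of_mem _ hsS
    refine ⟨den_dvd_int (dvd_trans ⟨s.imI.den * (s.imJ.den * s.imK.den), by ring⟩ hdvd),
      den_dvd_int (dvd_trans ⟨s.re.den * (s.imJ.den * s.imK.den), by ring⟩ hdvd),
      den_dvd_int (dvd_trans ⟨s.re.den * (s.imI.den * s.imK.den), by ring⟩ hdvd),
      den_dvd_int (dvd_trans ⟨s.re.den * (s.imI.den * s.imJ.den), by ring⟩ hdvd)⟩
  -- qnorm takes values in (1/M)ℤ on D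
  set M : ℚ := (N : ℚ) ^ 2 * c₁.den * c₂.den with hMdef
  have hMpos : 0 < M := by positivity
  have hqnD : ∀ x ∈ D, ∃ m : ℤ, qnorm c₁ c₂ x * M = m := by
    rintro x ⟨⟨m0, h0⟩, ⟨m1, h1⟩, ⟨m2, h2⟩, ⟨m3, h3⟩⟩
    refine ⟨m0 ^ 2 * c₁.den * c₂.den - c₁.num * c₂.den * m1 ^ 2 - c₂.num * c₁.den * m2 ^ 2
      + c₁.num * c₂.num * m3 ^ 2, ?_⟩
    have e1 : (c₁.num : ℚ) = c₁ * c₁.den := by exact_mod_cast (Rat.mul_den_eq_num c₁).symm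
    have e2 : (c₂.num : ℚ) = c₂ * c₂.den := by exact_mod_cast (Rat.mul_den_eq_num c₂).symm
    have key : qnorm c₁ c₂ x * M =
        (x.re * N) ^ 2 * c₁.den * c₂.den - (c₁ * c₁.den) * c₂.den * (x.imI * N) ^ 2
        - (c₂ * c₂.den) * c₁.den * (x.imJ * N) ^ 2
        + (c₁ * c₁.den) * (c₂ * c₂.den) * (x.imK * N) ^ 2 := by
      simp only [qnorm, hMdef]; ring
    rw [key, h0, h1, h2, h3, ← e1, ← e2]
    push_cast
    ring
  -- units have norm between 1/M and M
  set ε : ℚ := min 1 (min (-c₁) (min (-c₂) (c₁ * c₂))) with hεdef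
  have hε : 0 < ε := by
    apply lt_min (by norm_num)
    exact lt_min (by linarith) (lt_min (by linarith) (by nlinarith))
  have hε1 : ε ≤ 1 := min_le_left _ _
  have hεc1 : ε ≤ -c₁ := le_trans (min_le_right _ _) (min_le_left _ _)
  have hεc2 : ε ≤ -c₂ := le_trans (min_le_right _ _) (le_trans (min_le_right _ _) (min_le_left _ _))
  have hεc12 : ε ≤ c₁ * c₂ :=
    le_trans (min_le_right _ _) (le_trans (min_le_right _ _) (min_le_right _ _))
  set B : ℚ := (N : ℚ) ^ 2 * M / ε with hBdef
  set K : ℤ := ⌈B⌉ with hKdef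
  -- the encoding map
  set g : Γˣ → ℤ × ℤ × ℤ × ℤ := fun u =>
    (⌊((u : Γ) : ℍ[ℚ, c₁, c₂]).re * N⌋, ⌊((u : Γ) : ℍ[ℚ, c₁, c₂]).imI * N⌋,
     ⌊((u : Γ) : ℍ[ℚ, c₁, c₂]).imJ * N⌋, ⌊((u : Γ) : ℍ[ℚ, c₁, c₂]).imK * N⌋) with hgdef
  -- basic facts about a unit
  have hunit : ∀ u : Γˣ, ((u : Γ) : ℍ[ℚ, c₁, c₂]) ∈ D ∧
      qnorm c₁ c₂ ((u : Γ) : ℍ[ℚ, c₁, c₂]) ≤ M := by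
    intro u
    set x : ℍ[ℚ, c₁, c₂] := ((u : Γ) : ℍ[ℚ, c₁, c₂]) with hxdef
    set y : ℍ[ℚ, c₁, c₂] := (((u⁻¹ : Γˣ) : Γ) : ℍ[ℚ, c₁, c₂]) with hydef
    have hxΓ : x ∈ Γ := SetLike.coe_mem _
    have hyΓ : y ∈ Γ := SetLike.coe_mem _
    have hxD : x ∈ D := hΓD x hxΓ
    have hyD : y ∈ D := hΓD y hyΓ
    have hxy : x * y = 1 := by
      have h := congrArg (fun z : Γ => (z : ℍ[ℚ, c₁, c₂])) u.mul_inv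
      simp only [MulMemClass.coe_mul, OneMemClass.coe_one] at h
      rw [hxdef, hydef]
      exact h
    have hxne : x ≠ 0 := by
      intro h
      rw [h, zero_mul] at hxy
      exact zero_ne_one hxy
    have hyne : y ≠ 0 := by
      intro h
      rw [h, mul_zero] at hxy
      exact zero_ne_one hxy
    have hqx : 0 < qnorm c₁ c₂ x := qnorm_pos hc₁ hc₂ hxne
    have hqy : 0 < qnorm c₁ c₂ y := qnorm_pos hc₁ hc₂ hyne
    have hprod : qnorm c₁ c₂ x * qnorm c₁ c₂ y = 1 := by
      rw [← qnorm_mul, hxy, qnorm_one]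
    obtain ⟨m', hm'⟩ := hqnD y hyD
    have hm'pos : (0 : ℚ) < m' := by rw [← hm']; positivity
    have hm'one : (1 : ℚ) ≤ m' := by exact_mod_cast (by exact_mod_cast hm'pos : (0 : ℤ) < m')
    have hy_lb : 1 / M ≤ qnorm c₁ c₂ y := by
      rw [div_le_iff₀ hMpos]
      linarith [hm'.symm ▸ hm'one]
    refine ⟨hxD, ?_⟩
    -- qnorm x = 1 / qnorm y ≤ M
    have : qnorm c₁ c₂ x * (1 / M) ≤ qnorm c₁ c₂ x * qnorm c₁ c₂ y :=
      mul_le_mul_of_nonneg_left hy_lb (le_of_lt hqx)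
    rw [hprod] at this
    calc qnorm c₁ c₂ x = qnorm c₁ c₂ x * (1 / M) * M := by field_simp
    _ ≤ 1 * M := mul_le_mul_of_nonneg_right this (le_of_lt hMpos)
    _ = M := one_mul M
  -- coordinate bounds
  have hbound : ∀ u : Γˣ, (g u).1 ∈ Set.Icc (-K) K ∧ (g u).2.1 ∈ Set.Icc (-K) K ∧
      (g u).2.2.1 ∈ Set.Icc (-K) K ∧ (g u).2.2.2 ∈ Set.Icc (-K) K := by
    intro u
    obtain ⟨hxD, hxM⟩ := hunit u
    set x : ℍ[ℚ, c₁, c₂] := ((u : Γ) : ℍ[ℚ, c₁, c₂]) with hxdef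
    obtain ⟨⟨m0, h0⟩, ⟨m1, h1⟩, ⟨m2, h2⟩, ⟨m3, h3⟩⟩ := hxD
    have hq : qnorm c₁ c₂ x ≤ M := hxM
    have hqexp : x.re ^ 2 - c₁ * x.imI ^ 2 - c₂ * x.imJ ^ 2 + c₁ * c₂ * x.imK ^ 2 ≤ M := hq
    -- each coordinate squared is at most M / ε
    have t0 : ε * x.re ^ 2 ≤ M := by
      nlinarith [hqexp, mul_nonneg (by linarith : (0:ℚ) ≤ 1 - ε) (sq_nonneg x.re),
        mul_nonneg (by linarith : (0:ℚ) ≤ -c₁) (sq_nonneg x.imI),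
        mul_nonneg (by linarith : (0:ℚ) ≤ -c₂) (sq_nonneg x.imJ),
        mul_nonneg ((mul_pos_of_neg_of_neg hc₁ hc₂).le) (sq_nonneg x.imK)]
    have t1 : ε * x.imI ^ 2 ≤ M := by
      nlinarith [mul_nonneg (by linarith : (0:ℚ) ≤ -c₁ - ε) (sq_nonneg x.imI),
        sq_nonneg x.re,
        mul_nonneg (by linarith : (0:ℚ) ≤ -c₂) (sq_nonneg x.imJ),
        mul_nonneg ((mul_pos_of_neg_of_neg hc₁ hc₂).le) (sq_nonneg x.imK)]
    have t2 : ε * x.imJ ^ 2 ≤ M := by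
      nlinarith [mul_nonneg (by linarith : (0:ℚ) ≤ -c₂ - ε) (sq_nonneg x.imJ),
        sq_nonneg x.re,
        mul_nonneg (by linarith : (0:ℚ) ≤ -c₁) (sq_nonneg x.imI),
        mul_nonneg ((mul_pos_of_neg_of_neg hc₁ hc₂).le) (sq_nonneg x.imK)]
    have t3 : ε * x.imK ^ 2 ≤ M := by
      nlinarith [mul_nonneg (by nlinarith [mul_pos_of_neg_of_neg hc₁ hc₂] : (0:ℚ) ≤ c₁ * c₂ - ε) (sq_nonneg x.imK),
        sq_nonneg x.re,
        mul_nonneg (by linarith : (0:ℚ) ≤ -c₁) (sq_nonneg x.imI),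
        mul_nonneg (by linarith : (0:ℚ) ≤ -c₂) (sq_nonneg x.imJ)]
    have main : ∀ (q : ℚ) (m : ℤ), q * N = m → ε * q ^ 2 ≤ M → ⌊q * (N:ℚ)⌋ ∈ Set.Icc (-K) K := by
      intro q m hm ht
      rw [hm, Int.floor_intCast]
      have hsq : (m : ℚ) ^ 2 ≤ B := by
        rw [hBdef, le_div_iff₀ hε, ← hm]
        have := mul_le_mul_of_nonneg_left ht (le_of_lt (by positivity : (0:ℚ) < (N:ℚ)^2))
        nlinarith
      have hsqK : m ^ 2 ≤ K := by
        have : (m : ℚ) ^ 2 ≤ (K : ℚ) := le_trans hsq (Int.le_ceil B)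
        exact_mod_cast this
      have habs : |m| ≤ K := le_trans (int_abs_le_sq m) hsqK
      exact Set.mem_Icc.mpr (abs_le.mp habs)
    exact ⟨main x.re m0 h0 t0, main x.imI m1 h1 t1, main x.imJ m2 h2 t2, main x.imK m3 h3 t3⟩
  -- injectivity of g
  have hginj : Function.Injective g := by
    intro u v huv
    have h4 := huv
    simp only [hgdef, Prod.mk.injEq] at h4
    obtain ⟨e0, e1, e2, e3⟩ := h4
    set x : ℍ[ℚ, c₁, c₂] := ((u : Γ) : ℍ[ℚ, c₁, c₂]) with hxdef
    set y : ℍ[ℚ, c₁, c₂] := ((v : Γ) : ℍ[ℚ, c₁, c₂]) with hydef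
    have hxD : x ∈ D := hΓD x (SetLike.coe_mem _)
    have hyD : y ∈ D := hΓD y (SetLike.coe_mem _)
    obtain ⟨⟨m0, h0⟩, ⟨m1, h1⟩, ⟨m2, h2⟩, ⟨m3, h3⟩⟩ := hxD
    obtain ⟨⟨n0, k0⟩, ⟨n1, k1⟩, ⟨n2, k2⟩, ⟨n3, k3⟩⟩ := hyD
    have coord : ∀ (p q : ℚ) (a b : ℤ), p * N = a → q * N = b → ⌊p * (N:ℚ)⌋ = ⌊q * (N:ℚ)⌋ →
        p = q := by
      intro p q a b ha hb hfl
      rw [ha, hb, Int.floor_intCast, Int.floor_intCast] at hfl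
      have : p * N = q * N := by rw [ha, hb, hfl]
      exact mul_right_cancel₀ hNne this
    have hxyeq : x = y := QuaternionAlgebra.ext
      (coord _ _ m0 n0 h0 k0 e0) (coord _ _ m1 n1 h1 k1 e1)
      (coord _ _ m2 n2 h2 k2 e2) (coord _ _ m3 n3 h3 k3 e3)
    exact Units.ext (Subtype.ext hxyeq)
  -- conclude
  let T : Set (ℤ × ℤ × ℤ × ℤ) :=
    Set.Icc (-K) K ×ˢ (Set.Icc (-K) K ×ˢ (Set.Icc (-K) K ×ˢ Set.Icc (-K) K))
  have hT : T.Finite :=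
    (Set.finite_Icc _ _).prod ((Set.finite_Icc _ _).prod
      ((Set.finite_Icc _ _).prod (Set.finite_Icc _ _)))
  have hmem : ∀ u : Γˣ, g u ∈ T := by
    intro u
    obtain ⟨b0, b1, b2, b3⟩ := hbound u
    exact ⟨b0, b1, b2, b3⟩
  haveI := hT.to_subtype
  exact Finite.of_injective (fun u : Γˣ => (⟨g u, hmem u⟩ : T))
    fun u v h => hginj (congrArg Subtype.val h)
end

section
/- Let C₅ be the cyclic group of order 5. Then the unit group of the integral group ring ℤC₅ is infinite, but contains no subgroup isomorphic to ℤ × ℤ; that is, there is no injective group homomorphism ℤ × ℤ → (ℤC₅)ˣ. -/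
open MonoidAlgebra Multiplicative NumberField

/- ## Auxiliary development -/

def zhom {M : Type*} [CommMonoid M] (ζ : M) (h : ζ ^ 5 = 1) : Multiplicative (ZMod 5) →* M where
  toFun x := ζ ^ (Multiplicative.toAdd x).val
  map_one' := by simp
  map_mul' x y := by
    show ζ ^ (Multiplicative.toAdd x + Multiplicative.toAdd y).val = _
    rw [ZMod.val_add, ← pow_eq_pow_mod _ h, pow_add]

abbrev A5 : Type := MonoidAlgebra ℤ (Multiplicative (ZMod 5))

noncomputable section
abbrev K5 : Type := CyclotomicField 5 ℚ
instance : IsCyclotomicExtension {5} ℚ K5 := CyclotomicField.isCyclotomicExtension 5 ℚ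
instance : NumberField K5 := IsCyclotomicExtension.numberField {5} ℚ _
def ζ5 : K5 := IsCyclotomicExtension.zeta 5 ℚ K5
lemma hζ5 : IsPrimitiveRoot ζ5 5 := IsCyclotomicExtension.zeta_spec 5 ℚ K5
lemma hζ5' : IsPrimitiveRoot ζ5 5 := by simpa using hζ5
lemma ζ5_pow5 : ζ5 ^ 5 = 1 := hζ5'.pow_eq_one

def ζO : 𝓞 K5 := ⟨ζ5, hζ5'.isIntegral (by norm_num)⟩
lemma ζO_coe : (ζO : K5) = ζ5 := rfl
lemma ζO_pow5 : ζO ^ 5 = 1 := by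
  ext
  push_cast [ζO_coe]
  exact ζ5_pow5

def εh : A5 →ₐ[ℤ] ℤ := MonoidAlgebra.lift ℤ ℤ (Multiplicative (ZMod 5)) 1
def θh : A5 →ₐ[ℤ] 𝓞 K5 := MonoidAlgebra.lift ℤ (𝓞 K5) (Multiplicative (ZMod 5)) (zhom ζO ζO_pow5)
def θK : A5 →ₐ[ℤ] K5 := MonoidAlgebra.lift ℤ K5 (Multiplicative (ZMod 5)) (zhom ζ5 ζ5_pow5)

lemma θK_eq (a : A5) : (θh a : K5) = θK a := by
  have : ((algebraMap (𝓞 K5) K5).comp θh.toRingHom) = θK.toRingHom := by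
    apply MonoidAlgebra.ringHom_ext
    · intro b
      simp [θh, θK]
    · intro x
      simp only [RingHom.coe_comp, Function.comp_apply, AlgHom.toRingHom_eq_coe,
        RingHom.coe_coe, θh, θK]
      rw [show MonoidAlgebra.single x (1:ℤ) = MonoidAlgebra.of ℤ (Multiplicative (ZMod 5)) x from rfl,
        MonoidAlgebra.lift_of, MonoidAlgebra.lift_of]
      show ((ζO ^ _ : 𝓞 K5) : K5) = _
      push_cast [ζO_coe]
      rfl
  exact congrFun (congrArg (fun f => f.toFun) this) a

def ψh : A5 →+* ℤ × 𝓞 K5 := RingHom.prod εh.toRingHom θh.toRingHom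

-- sum expansion
lemma lift_eval {S : Type*} [CommRing S] [Algebra ℤ S] (F : Multiplicative (ZMod 5) →* S) (a : A5) :
    MonoidAlgebra.lift ℤ S (Multiplicative (ZMod 5)) F a
      = ∑ i : ZMod 5, (a.coeff (Multiplicative.ofAdd i) : S) * F (Multiplicative.ofAdd i) := by
  rw [MonoidAlgebra.lift_apply, Finsupp.sum_fintype]
  · refine Fintype.sum_equiv (Multiplicative.ofAdd) _ _ (fun i => ?_)
    rw [Algebra.smul_def, eq_intCast (algebraMap ℤ S)]
    rfl
  · intro x; rw [Algebra.smul_def, map_zero, zero_mul]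
end
noncomputable section
lemma zmod5_sum {M : Type*} [AddCommMonoid M] (f : ZMod 5 → M) :
    ∑ i : ZMod 5, f i = f 0 + f 1 + f 2 + f 3 + f 4 := Fin.sum_univ_five f
end

noncomputable section
lemma ζ5_rel : 1 + ζ5 + ζ5 ^ 2 + ζ5 ^ 3 + ζ5 ^ 4 = 0 := by
  have hne : ζ5 - 1 ≠ 0 := sub_ne_zero.mpr (hζ5'.ne_one (by norm_num))
  have h := geom_sum_mul ζ5 5
  rw [ζ5_pow5, sub_self] at h
  rcases mul_eq_zero.mp h with h' | h'
  · simp [Finset.sum_range_succ] at h'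
    linear_combination h'
  · exact absurd h' hne

lemma li4 : LinearIndependent ℚ (fun i : Fin 4 => ζ5 ^ (i : ℕ)) := by
  have pbli := (hζ5.powerBasis ℚ).basis.linearIndependent
  have hdim : (hζ5.powerBasis ℚ).dim = 4 := by
    rw [IsPrimitiveRoot.powerBasis_dim, ← Polynomial.cyclotomic_eq_minpoly_rat hζ5 (by norm_num),
      Polynomial.natDegree_cyclotomic]
    decide
  have h2 := pbli.comp (Fin.cast hdim.symm) (fun a b hab => by
    simpa [Fin.ext_iff] using hab)
  convert h2 using 1
  funext i
  rw [Function.comp_apply, PowerBasis.coe_basis, IsPrimitiveRoot.powerBasis_gen]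
  rfl
  rfl

lemma indep5 (c : ZMod 5 → ℤ) (h1 : c 0 + c 1 + c 2 + c 3 + c 4 = 0)
    (h2 : (c 0 : K5) + c 1 * ζ5 + c 2 * ζ5 ^ 2 + c 3 * ζ5 ^ 3 + c 4 * ζ5 ^ 4 = 0) :
    ∀ i, c i = 0 := by
  set v : Fin 4 → ℤ := ![c 0 - c 4, c 1 - c 4, c 2 - c 4, c 3 - c 4] with hv
  set g : Fin 4 → ℚ := fun i => ((v i : ℤ) : ℚ) with hg
  have hsum : ∑ i : Fin 4, g i • ζ5 ^ (i : ℕ) = 0 := by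
    rw [Fin.sum_univ_four]
    simp only [hg, hv, show ∀ (q : ℚ) (x : K5), q • x = (q : K5) * x from fun q x => Algebra.smul_def q x, Matrix.cons_val_zero, Matrix.cons_val_one, Matrix.head_cons,
      Matrix.cons_val_two, Matrix.tail_cons, Matrix.cons_val_three]
    push_cast
    show ((c 0 : K5) - c 4) * ζ5 ^ (0:ℕ) + ((c 1 : K5) - c 4) * ζ5 ^ (1:ℕ)
      + ((c 2 : K5) - c 4) * ζ5 ^ (2:ℕ) + ((c 3 : K5) - c 4) * ζ5 ^ (3:ℕ) = 0
    linear_combination h2 - (c 4 : K5) * ζ5_rel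
  have hz := Fintype.linearIndependent_iff.mp li4 g hsum
  have hvz : ∀ i, v i = 0 := fun i => by
    have := hz i; rw [hg] at this; simp only [] at this; exact_mod_cast this
  have e0 := hvz 0; have e1 := hvz 1; have e2 := hvz 2; have e3 := hvz 3
  simp [hv] at e0 e1 e2 e3
  intro i
  have hall : ∀ j : ZMod 5, j = 0 ∨ j = 1 ∨ j = 2 ∨ j = 3 ∨ j = 4 := by decide
  rcases hall i with h|h|h|h|h <;> rw [h] <;> omega

lemma ψh_inj : Function.Injective ψh := by
  rw [injective_iff_map_eq_zero]
  intro a ha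
  rw [Prod.ext_iff] at ha
  obtain ⟨hε, hθ⟩ := ha
  have hε2 : εh a = 0 := hε
  have hθ2 : θh a = 0 := hθ
  have hθK : θK a = 0 := by
    rw [← θK_eq, hθ2]
    push_cast
    rfl
  set c : ZMod 5 → ℤ := fun i => a.coeff (Multiplicative.ofAdd i) with hc
  have hε' : c 0 + c 1 + c 2 + c 3 + c 4 = 0 := by
    have h := lift_eval (S := ℤ) 1 a
    rw [show (MonoidAlgebra.lift ℤ ℤ (Multiplicative (ZMod 5))) 1 a = εh a from rfl, zmod5_sum,
      hε2] at h
    simp only [MonoidHom.one_apply, mul_one] at h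
    simp only [hc]
    push_cast at h
    omega
  have hθ' : (c 0 : K5) + c 1 * ζ5 + c 2 * ζ5 ^ 2 + c 3 * ζ5 ^ 3 + c 4 * ζ5 ^ 4 = 0 := by
    have h := lift_eval (S := K5) (zhom ζ5 ζ5_pow5) a
    rw [show (MonoidAlgebra.lift ℤ K5 (Multiplicative (ZMod 5))) (zhom ζ5 ζ5_pow5) a = θK a from rfl,
      zmod5_sum, hθK] at h
    have e0 : zhom ζ5 ζ5_pow5 (Multiplicative.ofAdd (0 : ZMod 5)) = 1 := by
      show ζ5 ^ (0 : ZMod 5).val = 1; norm_num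
    have e1 : zhom ζ5 ζ5_pow5 (Multiplicative.ofAdd (1 : ZMod 5)) = ζ5 := by
      show ζ5 ^ (1 : ZMod 5).val = ζ5
      rw [show (1 : ZMod 5).val = 1 from rfl, pow_one]
    have e2 : zhom ζ5 ζ5_pow5 (Multiplicative.ofAdd (2 : ZMod 5)) = ζ5 ^ 2 := by
      show ζ5 ^ (2 : ZMod 5).val = ζ5 ^ 2
      rw [show (2 : ZMod 5).val = 2 from rfl]
    have e3 : zhom ζ5 ζ5_pow5 (Multiplicative.ofAdd (3 : ZMod 5)) = ζ5 ^ 3 := by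
      show ζ5 ^ (3 : ZMod 5).val = ζ5 ^ 3
      rw [show (3 : ZMod 5).val = 3 from rfl]
    have e4 : zhom ζ5 ζ5_pow5 (Multiplicative.ofAdd (4 : ZMod 5)) = ζ5 ^ 4 := by
      show ζ5 ^ (4 : ZMod 5).val = ζ5 ^ 4
      rw [show (4 : ZMod 5).val = 4 from rfl]
    rw [e0, e1, e2, e3, e4, mul_one] at h
    linear_combination -h
  have hcz := indep5 c hε' hθ'
  ext x
  have : a.coeff x = c (Multiplicative.toAdd x) := rfl
  rw [this, hcz]
  rfl
end
noncomputable section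
open NumberField

instance : Module ℤ (Additive ((𝓞 K5)ˣ ⧸ NumberField.Units.torsion K5)) :=
  AddCommGroup.toIntModule (Additive ((𝓞 K5)ˣ ⧸ NumberField.Units.torsion K5))

lemma rank_K5 : NumberField.Units.rank K5 = 1 := by
  have hcard : Fintype.card (NumberField.InfinitePlace K5)
      = NumberField.InfinitePlace.nrRealPlaces K5 + NumberField.InfinitePlace.nrComplexPlaces K5 :=
    NumberField.InfinitePlace.card_eq_nrRealPlaces_add_nrComplexPlaces K5
  have h0 : NumberField.InfinitePlace.nrRealPlaces K5 = 0 :=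
    IsCyclotomicExtension.Rat.nrRealPlaces_eq_zero (n := 5) K5 (by decide)
  have h2 : NumberField.InfinitePlace.nrComplexPlaces K5 = Nat.totient ((5:ℕ+):ℕ) / 2 :=
    IsCyclotomicExtension.Rat.nrComplexPlaces_eq_totient_div_two 5 K5
  have ht : Nat.totient ((5:ℕ+):ℕ) = 4 := by decide
  have hrk : NumberField.Units.rank K5 = Fintype.card (NumberField.InfinitePlace K5) - 1 := rfl
  rw [hrk, hcard, h0, h2, ht]

theorem no_z2 : ¬ ∃ f : Multiplicative (ℤ × ℤ) →* A5ˣ, Function.Injective f := by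
  rintro ⟨f, hf⟩
  let Φ : A5ˣ →* (ℤ × 𝓞 K5)ˣ := Units.map ψh.toMonoidHom
  have hΦ : Function.Injective Φ := Units.map_injective ψh_inj
  let π2 : (ℤ × 𝓞 K5)ˣ →* (𝓞 K5)ˣ := Units.map (RingHom.snd ℤ (𝓞 K5)).toMonoidHom
  let π1 : (ℤ × 𝓞 K5)ˣ →* ℤˣ := Units.map (RingHom.fst ℤ (𝓞 K5)).toMonoidHom
  let g : Multiplicative (ℤ × ℤ) →* (𝓞 K5)ˣ := π2.comp (Φ.comp f)
  let F : Multiplicative (ℤ × ℤ) →* ((𝓞 K5)ˣ ⧸ NumberField.Units.torsion K5) :=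
    (QuotientGroup.mk' _).comp g
  have hFinj : Function.Injective F := by
    rw [injective_iff_map_eq_one]
    intro z hz
    have hgz : g z ∈ NumberField.Units.torsion K5 := (QuotientGroup.eq_one_iff _).mp hz
    have hfin : IsOfFinOrder (g z) := hgz
    obtain ⟨m, hm0, hm⟩ := isOfFinOrder_iff_pow_eq_one.mp hfin
    set w : (ℤ × 𝓞 K5)ˣ := Φ (f z) with hw
    have hu1 : (π1 w) ^ (2 * m) = 1 := by
      rw [pow_mul, Int.units_sq, one_pow]
    have hu2 : (π2 w) ^ (2 * m) = 1 := by
      have : π2 w = g z := rfl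
      rw [this, pow_mul', hm, one_pow]
    have hw2m : w ^ (2 * m) = 1 := by
      ext1
      rw [Units.val_pow_eq_pow_val, Units.val_one]
      refine Prod.ext ?_ ?_
      · rw [Prod.pow_fst]
        have h1 := congrArg Units.val hu1
        rw [Units.val_pow_eq_pow_val] at h1
        exact h1
      · rw [Prod.pow_snd]
        have h2' := congrArg Units.val hu2
        rw [Units.val_pow_eq_pow_val] at h2'
        exact h2'
    have hz2 : z ^ (2 * m) = 1 := by
      apply hf
      apply hΦ
      rw [map_pow, map_pow, ← hw, hw2m, map_one, map_one]
    set p : ℤ × ℤ := Multiplicative.toAdd z with hp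
    have hta := congrArg Multiplicative.toAdd hz2
    rw [toAdd_pow] at hta
    have hta1 : ((2*m : ℕ) : ℤ) * p.1 = 0 := by
      have h := congrArg Prod.fst hta
      rw [Prod.smul_fst] at h
      simpa [nsmul_eq_mul] using h
    have hta2 : ((2*m : ℕ) : ℤ) * p.2 = 0 := by
      have h := congrArg Prod.snd hta
      rw [Prod.smul_snd] at h
      simpa [nsmul_eq_mul] using h
    have hne : ((2*m : ℕ) : ℤ) ≠ 0 := by positivity
    have hp1 : p.1 = 0 := by rcases mul_eq_zero.mp hta1 with h | h; exact absurd h hne; exact h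
    have hp2 : p.2 = 0 := by rcases mul_eq_zero.mp hta2 with h | h; exact absurd h hne; exact h
    have hpz : p = (0, 0) := Prod.ext hp1 hp2
    have : Multiplicative.toAdd z = Multiplicative.toAdd (1 : Multiplicative (ℤ × ℤ)) := hpz
    exact Multiplicative.toAdd.injective this
  -- rank argument
  let F' : (ℤ × ℤ) →+ Additive ((𝓞 K5)ˣ ⧸ NumberField.Units.torsion K5) :=
    MonoidHom.toAdditiveRight F
  have hF' : Function.Injective F' := by
    intro a b h
    have h2 : F (Multiplicative.ofAdd a) = F (Multiplicative.ofAdd b) := h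
    exact hFinj h2
  haveI : Module.Finite ℤ (Additive ((𝓞 K5)ˣ ⧸ NumberField.Units.torsion K5)) :=
    Module.Finite.of_basis (NumberField.Units.basisModTorsion K5)
  have hF'' : Function.Injective (AddMonoidHom.toIntLinearMap (M := ℤ × ℤ) (M₂ := Additive ((𝓞 K5)ˣ ⧸ NumberField.Units.torsion K5)) F') := hF'
  have hle := LinearMap.finrank_le_finrank_of_injective hF''
  have hr2 : Module.finrank ℤ (ℤ × ℤ) = 2 := by
    rw [Module.finrank_prod, Module.finrank_self]
  have hr1 : Module.finrank ℤ (Additive ((𝓞 K5)ˣ ⧸ NumberField.Units.torsion K5)) = 1 := by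
    rw [Module.finrank_eq_card_basis (NumberField.Units.basisModTorsion K5), Fintype.card_fin,
      rank_K5]
  omega
end

noncomputable section
noncomputable def tt : A5 := MonoidAlgebra.of ℤ (Multiplicative (ZMod 5)) (ofAdd 1)

lemma tt_pow5 : tt ^ 5 = 1 := by
  rw [tt, ← map_pow]
  have : (ofAdd (1 : ZMod 5)) ^ 5 = 1 := by decide
  rw [this, map_one]

noncomputable def uu : A5ˣ where
  val := tt + tt ^ 4 - 1
  inv := tt ^ 2 + tt ^ 3 - 1
  val_inv := by linear_combination (tt + tt ^ 2) * tt_pow5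
  inv_val := by linear_combination (tt + tt ^ 2) * tt_pow5

noncomputable def zc : ℂ := Complex.exp ((2 * Real.pi / 5 : ℝ) * Complex.I)

lemma zc_pow5 : zc ^ 5 = 1 := by
  rw [zc, ← Complex.exp_nat_mul]
  rw [show ((5:ℕ) * ((2 * Real.pi / 5 : ℝ) * Complex.I)) = 2 * Real.pi * Complex.I by push_cast; ring]
  exact Complex.exp_two_pi_mul_I

noncomputable def phiC : A5 →ₐ[ℤ] ℂ :=
  MonoidAlgebra.lift ℤ ℂ (Multiplicative (ZMod 5)) (zhom zc zc_pow5)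

lemma phiC_tt : phiC tt = zc := by
  rw [tt, phiC, MonoidAlgebra.lift_of]
  show zc ^ (1 : ZMod 5).val = zc
  have : (1 : ZMod 5).val = 1 := rfl
  rw [this, pow_one]

noncomputable def rr : ℝ := 2 * Real.cos (2 * Real.pi / 5) - 1

lemma phiC_uu : phiC (uu : A5) = (rr : ℂ) := by
  have h4 : zc ^ 4 = Complex.exp (-((2 * Real.pi / 5 : ℝ) * Complex.I)) := by
    rw [zc, ← Complex.exp_nat_mul,
      show ((4:ℕ) * ((2 * Real.pi / 5 : ℝ) * Complex.I))
        = -((2 * Real.pi / 5 : ℝ) * Complex.I) + 2 * Real.pi * Complex.I by push_cast; ring,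
      Complex.exp_add, Complex.exp_two_pi_mul_I, mul_one]
  show phiC (tt + tt ^ 4 - 1) = _
  rw [map_sub, map_add, map_pow, map_one, phiC_tt, h4, zc]
  rw [show Complex.exp (((2 * Real.pi / 5 : ℝ)) * Complex.I)
      + Complex.exp (-(((2 * Real.pi / 5 : ℝ)) * Complex.I))
      = 2 * Complex.cos ((2 * Real.pi / 5 : ℝ)) by rw [Complex.cos]; ring]
  rw [← Complex.ofReal_cos, rr]
  push_cast
  ring

lemma rr_bounds : -1 < rr ∧ rr < 0 := by
  have hpi := Real.pi_pos
  have h1 : 0 < Real.cos (2 * Real.pi / 5) :=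
    Real.cos_pos_of_mem_Ioo ⟨by nlinarith, by nlinarith⟩
  have h2 : Real.cos (2 * Real.pi / 5) < Real.cos (Real.pi / 3) :=
    Real.cos_lt_cos_of_nonneg_of_le_pi (by positivity) (by nlinarith) (by nlinarith)
  rw [Real.cos_pi_div_three] at h2
  constructor <;> (rw [rr]; nlinarith)

lemma uu_inf : Function.Injective fun n : ℕ => uu ^ n := by
  intro m n h
  have h2 : ((uu : A5ˣ) : A5) ^ m = ((uu : A5ˣ) : A5) ^ n := by
    have := congrArg (Units.val) h
    simpa [Units.val_pow_eq_pow_val] using this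
  have h3 : (rr : ℂ) ^ m = (rr : ℂ) ^ n := by
    have := congrArg phiC h2
    rwa [map_pow, map_pow, phiC_uu] at this
  have h4 : rr ^ m = rr ^ n := by exact_mod_cast h3
  obtain ⟨hr1, hr0⟩ := rr_bounds
  have habs : |rr| ^ m = |rr| ^ n := by rw [← abs_pow, ← abs_pow, h4]
  have h0 : (0:ℝ) < |rr| := by rw [abs_of_neg hr0]; linarith
  have h1' : |rr| < 1 := by rw [abs_of_neg hr0]; linarith
  rcases lt_trichotomy m n with hlt | heq | hlt
  · exact absurd habs.symm (ne_of_lt (pow_lt_pow_right_of_lt_one₀ h0 h1' hlt))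
  · exact heq
  · exact absurd habs (ne_of_lt (pow_lt_pow_right_of_lt_one₀ h0 h1' hlt))
end

/-- **Statement.** The unit group of the integral group ring of the cyclic group of
order 5 is infinite, but contains no free abelian subgroup of rank two. -/
theorem units_int_group_ring_C5
    : Infinite (MonoidAlgebra ℤ (Multiplicative (ZMod 5)))ˣ ∧
      ¬ ∃ f : Multiplicative (ℤ × ℤ) →* (MonoidAlgebra ℤ (Multiplicative (ZMod 5)))ˣ,
        Function.Injective f := by
  exact ⟨Infinite.of_injective _ uu_inf, no_z2⟩
end

section
/- Let A be a finite-dimensional ℚ-algebra and let Γ₁ and Γ₂ be two ℤ-orders in A, i.e., subrings of A that are finitely generated as ℤ-modules and whose ℚ-spans equal A. If there is an injective group homomorphism ℤ × ℤ → Γ₁ˣ, then there is an injective group homomorphism ℤ × ℤ → Γ₂ˣ. -/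
private lemma exists_nsmul_mem_span_int {A : Type*} [AddCommGroup A] [Module ℚ A]
    {s : Set A} {a : A} (ha : a ∈ Submodule.span ℚ s) :
    ∃ n : ℕ, 0 < n ∧ (n : ℤ) • a ∈ Submodule.span ℤ s := by
  induction ha using Submodule.span_induction with
  | mem x hx => exact ⟨1, one_pos, by simpa using Submodule.subset_span hx⟩
  | zero => exact ⟨1, one_pos, by simp⟩
  | add x y hx hy ihx ihy =>
      obtain ⟨m, hm, hmx⟩ := ihx
      obtain ⟨n, hn, hny⟩ := ihy
      refine ⟨m * n, Nat.mul_pos hm hn, ?_⟩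
      have : ((m * n : ℕ) : ℤ) • (x + y) = (n : ℤ) • ((m : ℤ) • x) + (m : ℤ) • ((n : ℤ) • y) := by
        push_cast
        rw [smul_add, smul_smul, smul_smul, mul_comm (n : ℤ) (m : ℤ)]
      rw [this]
      exact Submodule.add_mem _ (Submodule.smul_mem _ _ hmx) (Submodule.smul_mem _ _ hny)
  | smul q x hx ih =>
      obtain ⟨m, hm, hmx⟩ := ih
      refine ⟨m * q.den, Nat.mul_pos hm q.pos, ?_⟩
      have key : ((m * q.den : ℕ) : ℤ) • (q • x) = q.num • ((m : ℤ) • x) := by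
        rw [← Int.cast_smul_eq_zsmul ℚ ((m * q.den : ℕ) : ℤ) (q • x),
          ← Int.cast_smul_eq_zsmul ℚ (m : ℤ) x, ← Int.cast_smul_eq_zsmul ℚ q.num,
          smul_smul, smul_smul]
        congr 1
        push_cast
        rw [mul_assoc, mul_comm (q.den : ℚ) q, Rat.mul_den_eq_num, mul_comm]
      rw [key]
      exact Submodule.smul_mem _ _ hmx

private lemma span_int_le_subring {A : Type*} [Ring A] (Γ : Subring A) {x : A}
    (hx : x ∈ Submodule.span ℤ (Γ : Set A)) : x ∈ Γ := by
  induction hx using Submodule.span_induction with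
  | mem x hx => exact hx
  | zero => exact Γ.zero_mem
  | add x y _ _ hx hy => exact Γ.add_mem hx hy
  | smul z x _ hx => exact zsmul_mem hx z

private lemma exists_scale_subset {A : Type*} [Ring A] [Algebra ℚ A]
    (Γ₁ Γ₂ : Subring A) (hfg₁ : AddSubgroup.FG Γ₁.toAddSubgroup)
    (hspan₂ : Submodule.span ℚ (Γ₂ : Set A) = ⊤) :
    ∃ N : ℕ, 0 < N ∧ ∀ x ∈ Γ₁, (N : ℤ) • x ∈ Γ₂ := by
  have key : ∀ s : A, ∃ n : ℕ, 0 < n ∧ (n : ℤ) • s ∈ Γ₂ := by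
    intro s
    obtain ⟨n, hn, hmem⟩ := exists_nsmul_mem_span_int (s := (Γ₂ : Set A)) (a := s)
      (by rw [hspan₂]; trivial)
    exact ⟨n, hn, span_int_le_subring Γ₂ hmem⟩
  obtain ⟨S, hS⟩ := hfg₁
  classical
  set n : A → ℕ := fun s => (key s).choose with hn
  refine ⟨∏ s ∈ S, n s, Finset.prod_pos fun s _ => (key s).choose_spec.1, ?_⟩
  intro x hx
  have hx' : x ∈ AddSubgroup.closure (S : Set A) := by rw [hS]; exact hx
  have hle : AddSubgroup.closure (S : Set A) ≤
      AddSubgroup.comap (zsmulAddGroupHom ((∏ s ∈ S, n s : ℕ) : ℤ)) Γ₂.toAddSubgroup := by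
    rw [AddSubgroup.closure_le]
    intro s hs
    obtain ⟨c, hc⟩ := Finset.dvd_prod_of_mem n hs
    have : ((∏ t ∈ S, n t : ℕ) : ℤ) • s = (c : ℤ) • (((n s : ℕ) : ℤ) • s) := by
      rw [smul_smul, ← Nat.cast_mul, mul_comm c (n s), ← hc]
    show ((∏ t ∈ S, n t : ℕ) : ℤ) • s ∈ Γ₂.toAddSubgroup
    rw [this]
    exact zsmul_mem ((key s).choose_spec.2) _
  exact hle hx'

private lemma exists_pow_val_mem {A : Type*} [Ring A] (Γ₁ Γ₂ : Subring A)
    (hfg₁ : AddSubgroup.FG Γ₁.toAddSubgroup) {N : ℕ} (hNpos : 0 < N)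
    (hsub : ∀ x ∈ Γ₁, (N : ℤ) • x ∈ Γ₂) (u : Γ₁ˣ) :
    ∃ m : ℕ, 0 < m ∧ (((u ^ m : Γ₁ˣ) : Γ₁) : A) ∈ Γ₂ ∧
      ((((u ^ m)⁻¹ : Γ₁ˣ) : Γ₁) : A) ∈ Γ₂ := by
  haveI hfg : AddGroup.FG Γ₁ := (AddGroup.fg_iff_addSubgroup_fg Γ₁.toAddSubgroup).mpr hfg₁
  haveI : Module.Finite ℤ Γ₁ := Module.Finite.iff_addGroup_fg.mpr hfg
  set f : Γ₁ →ₗ[ℤ] Γ₁ := (N : ℤ) • LinearMap.id with hf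
  set S : Submodule ℤ Γ₁ := LinearMap.range f with hSdef
  haveI hQfin : Finite (Γ₁ ⧸ S) := by
    haveI : AddGroup.FG (Γ₁ ⧸ S) := Module.Finite.iff_addGroup_fg.mp inferInstance
    refine AddCommGroup.finite_of_fg_torsion (Γ₁ ⧸ S) ?_
    intro q
    obtain ⟨x, rfl⟩ := Submodule.Quotient.mk_surjective S q
    rw [isOfFinAddOrder_iff_nsmul_eq_zero]
    refine ⟨N, hNpos, ?_⟩
    have h1 : (N • Submodule.Quotient.mk x : Γ₁ ⧸ S) = Submodule.Quotient.mk (N • x) :=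
      (map_nsmul (S.mkQ) N x).symm
    rw [h1, Submodule.Quotient.mk_eq_zero]
    exact ⟨x, by simp [hf, natCast_zsmul]⟩
  -- key computation
  have key : ∀ (w : Γ₁ˣ) (k l : ℕ), k < l →
      (Submodule.Quotient.mk ((w ^ l : Γ₁ˣ) : Γ₁) : Γ₁ ⧸ S) =
        Submodule.Quotient.mk ((w ^ k : Γ₁ˣ) : Γ₁) →
      (((w ^ (l - k) : Γ₁ˣ) : Γ₁) : A) ∈ Γ₂ := by
    intro w k l hkl h1
    rw [Submodule.Quotient.eq] at h1
    obtain ⟨y, hy⟩ := h1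
    have hy' : (N : ℤ) • y = ((w ^ l : Γ₁ˣ) : Γ₁) - ((w ^ k : Γ₁ˣ) : Γ₁) := by
      simpa [hf] using hy
    have hm : (w⁻¹) ^ k * w ^ l = w ^ (l - k) := by
      rw [inv_pow, inv_mul_eq_iff_eq_mul, ← pow_add, Nat.add_sub_cancel' hkl.le]
    have hcancel : ((w⁻¹ ^ k : Γ₁ˣ) : Γ₁) * ((w ^ k : Γ₁ˣ) : Γ₁) = 1 := by
      rw [← Units.val_mul, inv_pow, inv_mul_cancel, Units.val_one]
    have hval : ((w ^ (l - k) : Γ₁ˣ) : Γ₁) =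
        1 + (N : ℤ) • (((w⁻¹ ^ k : Γ₁ˣ) : Γ₁) * y) := by
      rw [← hm, Units.val_mul]
      have hl : ((w ^ l : Γ₁ˣ) : Γ₁) = ((w ^ k : Γ₁ˣ) : Γ₁) + (N : ℤ) • y := by
        rw [hy']; abel
      rw [hl, mul_add, hcancel, mul_smul_comm]
    rw [hval]
    push_cast
    refine Γ₂.add_mem Γ₂.one_mem ?_
    have := hsub ((((w⁻¹ ^ k : Γ₁ˣ) : Γ₁) * y : Γ₁) : A)
      (SetLike.coe_mem _)
    simpa using this
  obtain ⟨k, l, hkl, heq⟩ := Finite.exists_ne_map_eq_of_infinite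
    (fun k : ℕ => ((Submodule.Quotient.mk ((u ^ k : Γ₁ˣ) : Γ₁) : Γ₁ ⧸ S),
                   (Submodule.Quotient.mk ((u⁻¹ ^ k : Γ₁ˣ) : Γ₁) : Γ₁ ⧸ S)))
  have heq1 := congrArg Prod.fst heq
  have heq2 := congrArg Prod.snd heq
  simp only at heq1 heq2
  rcases hkl.lt_or_gt with h | h
  · refine ⟨l - k, Nat.sub_pos_of_lt h, key u k l h heq1.symm, ?_⟩
    have : ((u ^ (l - k))⁻¹ : Γ₁ˣ) = (u⁻¹) ^ (l - k) := by rw [inv_pow]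
    rw [this]
    exact key u⁻¹ k l h heq2.symm
  · refine ⟨k - l, Nat.sub_pos_of_lt h, key u l k h heq1, ?_⟩
    have : ((u ^ (k - l))⁻¹ : Γ₁ˣ) = (u⁻¹) ^ (k - l) := by rw [inv_pow]
    rw [this]
    exact key u⁻¹ l k h heq2

private def mkUnit {A : Type*} [Ring A] {Γ₁ Γ₂ : Subring A} (w : Γ₁ˣ)
    (h1 : ((w : Γ₁) : A) ∈ Γ₂) (h2 : (((w⁻¹ : Γ₁ˣ) : Γ₁) : A) ∈ Γ₂) : Γ₂ˣ where
  val := ⟨((w : Γ₁) : A), h1⟩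
  inv := ⟨(((w⁻¹ : Γ₁ˣ) : Γ₁) : A), h2⟩
  val_inv := by
    ext
    show ((w : Γ₁) : A) * (((w⁻¹ : Γ₁ˣ) : Γ₁) : A) = 1
    rw [← Subring.coe_mul, ← Units.val_mul, mul_inv_cancel, Units.val_one, Subring.coe_one]
  inv_val := by
    ext
    show (((w⁻¹ : Γ₁ˣ) : Γ₁) : A) * ((w : Γ₁) : A) = 1
    rw [← Subring.coe_mul, ← Units.val_mul, inv_mul_cancel, Units.val_one, Subring.coe_one]

example {A : Type*} [Ring A] {Γ₁ Γ₂ : Subring A} (w : Γ₁ˣ)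
    (h1 : ((w : Γ₁) : A) ∈ Γ₂) (h2 : (((w⁻¹ : Γ₁ˣ) : Γ₁) : A) ∈ Γ₂) :
    (((mkUnit w h1 h2 : Γ₂ˣ) : Γ₂) : A) = ((w : Γ₁) : A) := rfl

/-- Let `A` be a finite-dimensional ℚ-algebra and `Γ₁, Γ₂` two ℤ-orders
in `A`. If `ℤ × ℤ` embeds into `Γ₁ˣ`, then `ℤ × ℤ` embeds into `Γ₂ˣ`. (Any two ℤ-orders
are commensurable, so containing a rank-two free abelian subgroup of units does not
depend on the chosen order.) -/
theorem Z2_in_units_order_independent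
    (A : Type*) [Ring A] [Algebra ℚ A] [FiniteDimensional ℚ A]
    (Γ₁ Γ₂ : Subring A)
    (hfg₁ : AddSubgroup.FG Γ₁.toAddSubgroup)
    (hspan₁ : Submodule.span ℚ (Γ₁ : Set A) = ⊤)
    (hfg₂ : AddSubgroup.FG Γ₂.toAddSubgroup)
    (hspan₂ : Submodule.span ℚ (Γ₂ : Set A) = ⊤)
    (h : ∃ f : Multiplicative (ℤ × ℤ) →* Γ₁ˣ, Function.Injective f) :
    ∃ f : Multiplicative (ℤ × ℤ) →* Γ₂ˣ, Function.Injective f := by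
  obtain ⟨f, hf⟩ := h
  obtain ⟨N, hNpos, hsub⟩ := exists_scale_subset Γ₁ Γ₂ hfg₁ hspan₂
  set u : Γ₁ˣ := f (Multiplicative.ofAdd (1, 0)) with hu
  set v : Γ₁ˣ := f (Multiplicative.ofAdd (0, 1)) with hv
  obtain ⟨m, hm, hm1, hm2⟩ := exists_pow_val_mem Γ₁ Γ₂ hfg₁ hNpos hsub u
  obtain ⟨n, hn, hn1, hn2⟩ := exists_pow_val_mem Γ₁ Γ₂ hfg₁ hNpos hsub v
  set U : Γ₂ˣ := (mkUnit (u ^ m) hm1 hm2) ^ n with hU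
  set V : Γ₂ˣ := (mkUnit (v ^ n) hn1 hn2) ^ m with hV
  set j₁ : Γ₁ˣ →* Aˣ := Units.map (Γ₁.subtype : Γ₁ →* A) with hj₁
  set j₂ : Γ₂ˣ →* Aˣ := Units.map (Γ₂.subtype : Γ₂ →* A) with hj₂
  have hinj₁ : Function.Injective j₁ := Units.map_injective Subtype.coe_injective
  have hinj₂ : Function.Injective j₂ := Units.map_injective Subtype.coe_injective
  have hUval : j₂ U = j₁ (u ^ (m * n)) := by
    have h1 : j₂ (mkUnit (u ^ m) hm1 hm2) = j₁ (u ^ m) := Units.ext rfl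
    rw [hU, map_pow, h1, ← map_pow, ← pow_mul]
  have hVval : j₂ V = j₁ (v ^ (m * n)) := by
    have h1 : j₂ (mkUnit (v ^ n) hn1 hn2) = j₁ (v ^ n) := Units.ext rfl
    rw [hV, map_pow, h1, ← map_pow, ← pow_mul']
  have hcuv : Commute u v := (Commute.all _ _).map f
  have hC : Commute U V := by
    have : Commute (j₂ U) (j₂ V) := by
      rw [hUval, hVval]
      exact ((hcuv.pow_pow _ _).map j₁)
    exact hinj₂ this.eq
  refine ⟨{ toFun := fun x => U ^ (Multiplicative.toAdd x).1 * V ^ (Multiplicative.toAdd x).2,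
            map_one' := by simp,
            map_mul' := fun x y => by
              simp only [toAdd_mul, Prod.fst_add, Prod.snd_add, zpow_add]
              exact (hC.zpow_zpow (Multiplicative.toAdd y).1
                (Multiplicative.toAdd x).2).mul_mul_mul_comm _ _ }, ?_⟩
  rw [injective_iff_map_eq_one]
  intro x hx
  simp only [MonoidHom.coe_mk, OneHom.coe_mk] at hx
  set a := (Multiplicative.toAdd x).1 with ha
  set b := (Multiplicative.toAdd x).2 with hb
  have hsplit : ∀ c d : ℤ, f (Multiplicative.ofAdd (c, d)) = u ^ c * v ^ d := by
    intro c d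
    have hcd : (c, d) = c • ((1 : ℤ), (0 : ℤ)) + d • ((0 : ℤ), (1 : ℤ)) := by
      simp [Prod.ext_iff]
    rw [hcd, ofAdd_add, map_mul, ofAdd_zsmul, ofAdd_zsmul, map_zpow, map_zpow, ← hu, ← hv]
  have step := congrArg j₂ hx
  rw [map_mul, map_zpow, map_zpow, hUval, hVval, map_one, ← map_zpow, ← map_zpow,
    ← map_mul] at step
  have h0 : (u ^ (m * n)) ^ a * (v ^ (m * n)) ^ b = 1 := hinj₁ (by rw [step, map_one])
  have h1 : f (Multiplicative.ofAdd (((m * n : ℕ) : ℤ) * a, ((m * n : ℕ) : ℤ) * b)) = 1 := by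
    rw [hsplit, zpow_mul, zpow_mul, zpow_natCast, zpow_natCast]
    exact h0
  have h2 : (((m * n : ℕ) : ℤ) * a, ((m * n : ℕ) : ℤ) * b) = (0, 0) := by
    have := hf (h1.trans (map_one f).symm)
    exact Multiplicative.ofAdd.injective (by exact_mod_cast this)
  have hmn : ((m * n : ℕ) : ℤ) ≠ 0 := by positivity
  have ha0 : a = 0 := by
    have h' : ((m * n : ℕ) : ℤ) * a = 0 := congrArg Prod.fst h2
    exact (mul_eq_zero.mp h').resolve_left hmn
  have hb0 : b = 0 := by
    have h' : ((m * n : ℕ) : ℤ) * b = 0 := congrArg Prod.snd h2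
    exact (mul_eq_zero.mp h').resolve_left hmn
  have : Multiplicative.toAdd x = 0 := Prod.ext ha0 hb0
  have := congrArg Multiplicative.ofAdd this
  simpa using this
end
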